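/- Let B be an integral domain, G a finite group acting on B by ring automorphisms, and A = B^G the invariant subring. If B is projective as a module over B ⊗_A B (i.e., B is a separable A-algebra), then every A-linear endomorphism f of B has the form f(t) = Σ_{g∈G} b_g · g(t) for some elements b_g ∈ B; equivalently, the map φ : B*G → End_A(B), φ(b ⊗ g)(t) = b·g(t), is surjective. -/

import Mathlib

open scoped TensorProduct

noncomputable section

/-- The fixed subring `B^G` of a group action on a commutative ring. -/
def fixedSubring (G B : Type) [Group G] [CommRing B] [MulSemiringAction G B] : Subring B where
  carrier := {b | ∀ g : G, g • b = b}
  mul_mem' ha hb := fun g => by rw [smul_mul', ha g, hb g]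
  add_mem' ha hb := fun g => by rw [smul_add, ha g, hb g]
  one_mem' := fun g => smul_one g
  zero_mem' := fun g => smul_zero g
  neg_mem' ha := fun g => by rw [smul_neg, ha g]

section Aux

variable (G B : Type) [Group G] [CommRing B] [MulSemiringAction G B]

/-- Multiplication twisted by `g`, as an `A`-linear map on `B ⊗[A] B`. -/
def mApp (g : G) : (B ⊗[↥(fixedSubring G B)] B) →ₗ[↥(fixedSubring G B)] B :=
  TensorProduct.lift (LinearMap.mk₂ _ (fun x y => x * g • y)
    (fun x x' y => by rw [add_mul])
    (fun a x y => by rw [Algebra.smul_def, Algebra.smul_def, mul_assoc])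
    (fun x y y' => by rw [smul_add, mul_add])
    (fun a x y => by
      rw [Algebra.smul_def, Algebra.smul_def]
      show x * g • ((a : B) * y) = (a : B) * (x * g • y)
      rw [smul_mul', a.2 g]; ring))

lemma mApp_tmul (g : G) (x y : B) :
    mApp G B g (x ⊗ₜ[↥(fixedSubring G B)] y) = x * g • y := rfl

lemma mApp_mul_left (g : G) (b : B) (z : B ⊗[↥(fixedSubring G B)] B) :
    mApp G B g ((b ⊗ₜ[↥(fixedSubring G B)] (1 : B)) * z) = b * mApp G B g z := by
  induction z using TensorProduct.induction_on with
  | zero => simp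
  | tmul x y =>
      rw [Algebra.TensorProduct.tmul_mul_tmul, mApp_tmul, mApp_tmul, one_mul, mul_assoc]
  | add z w hz hw => rw [mul_add, map_add, hz, hw, map_add, mul_add]

lemma mApp_mul_right (g : G) (b : B) (z : B ⊗[↥(fixedSubring G B)] B) :
    mApp G B g (((1 : B) ⊗ₜ[↥(fixedSubring G B)] b) * z) = g • b * mApp G B g z := by
  induction z using TensorProduct.induction_on with
  | zero => simp
  | tmul x y =>
      rw [Algebra.TensorProduct.tmul_mul_tmul, mApp_tmul, mApp_tmul, one_mul, smul_mul']
      ring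
  | add z w hz hw => rw [mul_add, map_add, hz, hw, map_add, mul_add]

end Aux

set_option maxHeartbeats 1000000 in
set_option synthInstance.maxHeartbeats 400000 in
/-- Proposition 3.8: let `B` be an integral domain, `G` a finite group
acting on `B` by ring automorphisms and `A = B^G`.  If `B` is a separable `A`-algebra
(i.e. `B` is projective as a module over `B ⊗_A B`, acting via multiplication), then every
`A`-linear endomorphism `f` of `B` has the form `f(t) = ∑_{g ∈ G} b_g · g(t)`; that is,
the natural map `φ : B*G → End_A(B)` is surjective. -/
theorem stmt_3 (B G : Type) [CommRing B] [IsDomain B] [Group G] [Fintype G]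
    [MulSemiringAction G B]
    (hsep :
      letI : Module (B ⊗[↥(fixedSubring G B)] B) B :=
        Module.compHom B (Algebra.TensorProduct.lmul' ↥(fixedSubring G B) (S := B)).toRingHom
      Module.Projective (B ⊗[↥(fixedSubring G B)] B) B)
    (f : B →ₗ[↥(fixedSubring G B)] B) :
    ∃ b : G → B, ∀ t : B, f t = ∑ g : G, b g * g • t := by
  classical
  letI : Module (B ⊗[↥(fixedSubring G B)] B) B :=
    Module.compHom B (Algebra.TensorProduct.lmul' ↥(fixedSubring G B) (S := B)).toRingHom
  set μ : (B ⊗[↥(fixedSubring G B)] B) →+* B :=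
    (Algebra.TensorProduct.lmul' ↥(fixedSubring G B) (S := B)).toRingHom with hμdef
  have hsmul : ∀ (r : B ⊗[↥(fixedSubring G B)] B) (x : B), r • x = μ r * x := fun r x => rfl
  let μL : (B ⊗[↥(fixedSubring G B)] B) →ₗ[B ⊗[↥(fixedSubring G B)] B] B :=
    { toFun := μ
      map_add' := map_add μ
      map_smul' := fun r x => by
        show μ (r * x) = r • μ x
        rw [hsmul, map_mul] }
  have hμtmul : ∀ x y : B, μ (x ⊗ₜ y) = x * y := fun x y =>
    Algebra.TensorProduct.lmul'_apply_tmul x y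
  have hsurj : Function.Surjective μL := fun b => ⟨b ⊗ₜ[↥(fixedSubring G B)] (1:B), by
    show μ (b ⊗ₜ[↥(fixedSubring G B)] (1:B)) = b
    rw [hμtmul, mul_one]⟩
  obtain ⟨s, hs⟩ := Module.projective_lifting_property μL LinearMap.id hsurj
  have hse : ∀ b : B, μ (s b) = b := fun b => LinearMap.ext_iff.mp hs b
  set e := s 1 with he
  have hμe : μ e = 1 := hse 1
  have hre : ∀ r : B ⊗[↥(fixedSubring G B)] B, r * e = s (μ r) := by
    intro r
    have h1 := map_smul s r (1 : B)
    rw [hsmul r 1, mul_one, smul_eq_mul] at h1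
    exact h1.symm
  have hbal : ∀ b : B,
      (b ⊗ₜ[↥(fixedSubring G B)] (1 : B)) * e = ((1 : B) ⊗ₜ[↥(fixedSubring G B)] b) * e := by
    intro b
    rw [hre, hre, hμtmul, hμtmul, mul_one, one_mul]
  obtain ⟨S, hS⟩ := TensorProduct.exists_finset e
  set φ : G →* RingAut B := MulSemiringAction.toRingAut G B with hφdef
  have hφ : ∀ (g : G) (x : B), φ g x = g • x := fun g x => rfl
  set SH : Finset (RingAut B) := Finset.univ.image φ with hSH
  have h1SH : (1 : RingAut B) ∈ SH := Finset.mem_image.mpr ⟨1, Finset.mem_univ 1, map_one φ⟩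
  -- the "trace" over the image of G in RingAut B
  set T : B → B := fun x => ∑ σ ∈ SH, σ x with hT
  have hTmem : ∀ x : B, T x ∈ fixedSubring G B := by
    intro x h
    show h • T x = T x
    have h1 : h • T x = ∑ σ ∈ SH, (φ h * σ) x := by
      rw [hT]
      simp only [Finset.smul_sum]
      exact Finset.sum_congr rfl fun σ _ => rfl
    have himg : SH.image (fun σ => φ h * σ) = SH := by
      rw [hSH, Finset.image_image]
      have h2 : ((fun σ => φ h * σ) ∘ φ) = φ ∘ (fun g => h * g) := by
        funext g; simp [map_mul]
      rw [h2, ← Finset.image_image]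
      congr 1
      exact Finset.image_univ_of_surjective fun y => ⟨h⁻¹ * y, by group⟩
    have h3 : ∑ σ ∈ SH.image (fun σ => φ h * σ), σ x = ∑ σ ∈ SH, (φ h * σ) x :=
      Finset.sum_image (f := fun σ : RingAut B => σ x) fun a _ b _ hab => mul_left_cancel hab
    rw [h1, ← h3, himg]
  -- key identity from the separability idempotent
  have hkey : ∀ (g : G) (b : B), b * mApp G B g e = g • b * mApp G B g e := by
    intro g b
    have h1 := congrArg (mApp G B g) (hbal b)
    rwa [mApp_mul_left, mApp_mul_right] at h1
  have hεg : ∀ g : G, mApp G B g e = ∑ p ∈ S, p.1 * g • p.2 := by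
    intro g
    rw [hS, map_sum]
    exact Finset.sum_congr rfl fun p _ => mApp_tmul G B g p.1 p.2
  have hεval : ∀ σ ∈ SH, (∑ p ∈ S, p.1 * σ p.2) = if σ = 1 then (1 : B) else 0 := by
    intro σ hσ
    obtain ⟨g, -, hg⟩ := Finset.mem_image.mp hσ
    have hσg : ∀ y : B, σ y = g • y := fun y => by rw [← hg]; rfl
    have hsum : (∑ p ∈ S, p.1 * σ p.2) = mApp G B g e := by
      rw [hεg]
      exact Finset.sum_congr rfl fun p _ => by rw [hσg]
    by_cases h1 : σ = 1
    · rw [if_pos h1, hsum, hεg]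
      have htr : ∀ y : B, g • y = y := fun y => by rw [← hσg, h1]; rfl
      have : (∑ p ∈ S, p.1 * g • p.2) = μ e := by
        rw [hS, map_sum]
        exact Finset.sum_congr rfl fun p _ => by rw [htr, hμtmul]
      rw [this, hμe]
    · rw [if_neg h1, hsum]
      obtain ⟨b, hb⟩ : ∃ b : B, σ b ≠ b := by
        by_contra hc
        push_neg at hc
        exact h1 (RingEquiv.ext hc)
      have h2 : (g • b - b) * mApp G B g e = 0 := by
        rw [sub_mul, ← hkey g b, sub_self]
      rcases mul_eq_zero.mp h2 with h3 | h3
      · exact absurd (by rw [hσg]; exact sub_eq_zero.mp h3) hb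
      · exact h3
  -- the main identity : ∑ p, p.1 * T (p.2 * t) = t
  have hmain : ∀ t : B, ∑ p ∈ S, p.1 * T (p.2 * t) = t := by
    intro t
    have h1 : ∀ p : B × B, p.1 * T (p.2 * t) = ∑ σ ∈ SH, p.1 * σ p.2 * σ t := by
      intro p
      rw [hT, Finset.mul_sum]
      exact Finset.sum_congr rfl fun σ _ => by rw [map_mul]; ring
    calc ∑ p ∈ S, p.1 * T (p.2 * t)
        = ∑ p ∈ S, ∑ σ ∈ SH, p.1 * σ p.2 * σ t := Finset.sum_congr rfl fun p _ => h1 p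
      _ = ∑ σ ∈ SH, (∑ p ∈ S, p.1 * σ p.2) * σ t := by
          rw [Finset.sum_comm]
          exact Finset.sum_congr rfl fun σ _ => by rw [Finset.sum_mul]
      _ = ∑ σ ∈ SH, (if σ = 1 then (1 : B) else 0) * σ t :=
          Finset.sum_congr rfl fun σ hσ => by rw [hεval σ hσ]
      _ = ∑ σ ∈ SH, (if σ = 1 then σ t else 0) :=
          Finset.sum_congr rfl fun σ _ => by split <;> simp
      _ = t := by rw [Finset.sum_ite_eq' SH (1 : RingAut B) (fun σ => σ t), if_pos h1SH]; rfl
  -- f applied to elements of A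
  have hfA : ∀ (a x : B), a ∈ fixedSubring G B → f (a * x) = a * f x := by
    intro a x ha
    have h1 := map_smul f (⟨a, ha⟩ : ↥(fixedSubring G B)) x
    rw [Algebra.smul_def, Algebra.smul_def] at h1
    exact h1
  set c : RingAut B → B := fun σ => ∑ p ∈ S, f p.1 * σ p.2 with hc
  have hfc : ∀ t : B, f t = ∑ σ ∈ SH, c σ * σ t := by
    intro t
    conv_lhs => rw [← hmain t]
    rw [map_sum]
    calc ∑ p ∈ S, f (p.1 * T (p.2 * t))
        = ∑ p ∈ S, T (p.2 * t) * f p.1 := by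
          refine Finset.sum_congr rfl fun p _ => ?_
          rw [mul_comm p.1, hfA _ _ (hTmem _)]
      _ = ∑ p ∈ S, ∑ σ ∈ SH, f p.1 * σ p.2 * σ t := by
          refine Finset.sum_congr rfl fun p _ => ?_
          rw [hT, Finset.sum_mul]
          exact Finset.sum_congr rfl fun σ _ => by rw [map_mul]; ring
      _ = ∑ σ ∈ SH, c σ * σ t := by
          rw [Finset.sum_comm]
          exact Finset.sum_congr rfl fun σ _ => by rw [hc, Finset.sum_mul]
  -- choose a section of φ on SH and reindex the sum over G
  set r : RingAut B → G := fun σ => if h : ∃ g : G, φ g = σ then h.choose else 1 with hrdef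
  have hr : ∀ σ ∈ SH, φ (r σ) = σ := by
    intro σ hσ
    obtain ⟨g, -, hg⟩ := Finset.mem_image.mp hσ
    have hex : ∃ g : G, φ g = σ := ⟨g, hg⟩
    rw [hrdef]
    simp only [dif_pos hex]
    exact hex.choose_spec
  refine ⟨fun g => ∑ σ ∈ SH.filter (fun σ => r σ = g), c σ, fun t => ?_⟩
  rw [hfc t]
  calc ∑ σ ∈ SH, c σ * σ t
      = ∑ σ ∈ SH, c σ * (r σ) • t := by
        refine Finset.sum_congr rfl fun σ hσ => ?_
        rw [← hφ (r σ) t, hr σ hσ]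
    _ = ∑ σ ∈ SH, ∑ g : G, (if r σ = g then c σ * g • t else 0) := by
        refine Finset.sum_congr rfl fun σ _ => ?_
        rw [Finset.sum_ite_eq Finset.univ (r σ) (fun g => c σ * g • t), if_pos (Finset.mem_univ _)]
    _ = ∑ g : G, (∑ σ ∈ SH.filter (fun σ => r σ = g), c σ) * g • t := by
        rw [Finset.sum_comm]
        refine Finset.sum_congr rfl fun g _ => ?_
        rw [Finset.sum_filter, Finset.sum_mul]
        exact Finset.sum_congr rfl fun σ _ => by split <;> simp
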